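/- Let ω = e^{2πi/3}, let u, v, u_x, u_{xx}, v_x ∈ ℝ, let k ∈ ℂ with k ≠ 0, and let L(k) = −kJ + U^{(0)} + (1/k)U^{(−1)} and Z(k) = k²J² + kV^{(1)} + V^{(0)} + (1/k)V^{(−1)} be the gauge-transformed Lax matrices of the Hirota–Satsuma system, where J = diag(ω, ω², 1), U^{(0)} = (u/3)[[0,ω²,ω],[ω,0,ω²],[ω²,ω,0]], U^{(−1)} = −(v/3)[[ω²,1,ω],[1,ω,ω²],[ω,ω²,1]], V^{(1)} = (u/3)[[0,ω²,1],[ω,0,1],[ω,ω²,0]], V^{(−1)} = ((2u_{xx}−uv−3v_x)/9)[[ω²,1,ω],[1,ω,ω²],[ω,ω²,1]], and V^{(0)} = (1/9)[[0, ω²u²+(1−ω)u_x−3v, ωu²+(ω+2)u_x−3v],[ωu²−3v+(ω+2)u_x, 0, ω²u²+(1−ω)u_x−3v],[ω²u²−3v+(1−ω)u_x, ωu²−3v+(ω+2)u_x, 0]]. Let 𝓑 = [[0,1,0],[1,0,0],[0,0,1]]. Then L(k) = 𝓑 · conj(L(conj k)) · 𝓑 and Z(k) = 𝓑 · conj(Z(conj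 k)) · 𝓑, where conj denotes entrywise complex conjugation. -/

import Mathlib

open Matrix

/-- ω = e^{2πi/3}, a primitive cube root of unity. -/
noncomputable def ω : ℂ := Complex.exp (2 * Real.pi * Complex.I / 3)

/-- The diagonal matrix J = diag(ω, ω², 1). -/
noncomputable def Jmat : Matrix (Fin 3) (Fin 3) ℂ := Matrix.diagonal ![ω, ω^2, 1]

/-- U⁽⁰⁾. -/
noncomputable def U0 (u : ℝ) : Matrix (Fin 3) (Fin 3) ℂ :=
  ((u : ℂ)/3) • !![0, ω^2, ω; ω, 0, ω^2; ω^2, ω, 0]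

/-- U⁽⁻¹⁾. -/
noncomputable def Um1 (v : ℝ) : Matrix (Fin 3) (Fin 3) ℂ :=
  (-(v : ℂ)/3) • !![ω^2, 1, ω; 1, ω, ω^2; ω, ω^2, 1]

/-- V⁽¹⁾. -/
noncomputable def V1 (u : ℝ) : Matrix (Fin 3) (Fin 3) ℂ :=
  ((u : ℂ)/3) • !![0, ω^2, 1; ω, 0, 1; ω, ω^2, 0]

/-- V⁽⁻¹⁾. -/
noncomputable def Vm1 (u v uxx vx : ℝ) : Matrix (Fin 3) (Fin 3) ℂ :=
  (((2*uxx - u*v - 3*vx : ℝ) : ℂ)/9) • !![ω^2, 1, ω; 1, ω, ω^2; ω, ω^2, 1]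

/-- V⁽⁰⁾. -/
noncomputable def V0 (u v ux : ℝ) : Matrix (Fin 3) (Fin 3) ℂ :=
  (1/9 : ℂ) •
  !![0, ω^2*(u : ℂ)^2 + (1-ω)*(ux : ℂ) - 3*(v : ℂ), ω*(u : ℂ)^2 + (ω+2)*(ux : ℂ) - 3*(v : ℂ);
     ω*(u : ℂ)^2 - 3*(v : ℂ) + (ω+2)*(ux : ℂ), 0, ω^2*(u : ℂ)^2 + (1-ω)*(ux : ℂ) - 3*(v : ℂ);
     ω^2*(u : ℂ)^2 - 3*(v : ℂ) + (1-ω)*(ux : ℂ), ω*(u : ℂ)^2 - 3*(v : ℂ) + (ω+2)*(ux : ℂ), 0]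

/-- The gauge-transformed spatial Lax matrix L(k) = −kJ + U⁽⁰⁾ + (1/k)U⁽⁻¹⁾. -/
noncomputable def Lmat (u v : ℝ) (k : ℂ) : Matrix (Fin 3) (Fin 3) ℂ :=
  (-k) • Jmat + U0 u + k⁻¹ • Um1 v

/-- The gauge-transformed temporal Lax matrix Z(k) = k²J² + kV⁽¹⁾ + V⁽⁰⁾ + (1/k)V⁽⁻¹⁾. -/
noncomputable def Zmat (u v ux uxx vx : ℝ) (k : ℂ) : Matrix (Fin 3) (Fin 3) ℂ :=
  k^2 • Jmat^2 + k • V1 u + V0 u v ux + k⁻¹ • Vm1 u v uxx vx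

/-- The permutation matrix 𝓑 swapping the first two coordinates. -/
def Bmat : Matrix (Fin 3) (Fin 3) ℂ := !![0, 1, 0; 1, 0, 0; 0, 0, 1]


lemma omega_cube : ω^3 = 1 := by
  rw [ω, ← Complex.exp_nat_mul]
  rw [show (3:ℕ) * (2 * Real.pi * Complex.I / 3) = 2 * Real.pi * Complex.I by push_cast; ring,
    Complex.exp_two_pi_mul_I]

lemma omega_ne_one : ω ≠ 1 := by
  intro h
  rw [ω, Complex.exp_eq_one_iff] at h
  obtain ⟨n, hn⟩ := h
  have hne : (2 * Real.pi * Complex.I : ℂ) ≠ 0 := by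
    simp [Real.pi_ne_zero, Complex.I_ne_zero]
  have h3 : (3 * (n : ℂ)) = 1 := by
    have h0 : ((3 * (n:ℂ)) - 1) * (2 * Real.pi * Complex.I) = 0 := by
      linear_combination -3 * hn
    rcases mul_eq_zero.1 h0 with h1 | h2
    · linear_combination h1
    · exact absurd h2 hne
  have : ((3*n : ℤ) : ℂ) = 1 := by push_cast; linear_combination h3
  have h4 : (3*n : ℤ) = 1 := by exact_mod_cast this
  omega

lemma omega_quad : ω^2 = -1 - ω := by
  have h := omega_cube
  have hne := omega_ne_one
  have : (ω - 1) * (ω^2 + ω + 1) = 0 := by linear_combination h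
  rcases mul_eq_zero.1 this with h1 | h2
  · exact absurd (sub_eq_zero.1 h1) hne
  · linear_combination h2

lemma conj_omega : (starRingEnd ℂ) ω = -1 - ω := by
  have habs : ω * (starRingEnd ℂ) ω = 1 := by
    rw [ω, ← Complex.exp_conj, ← Complex.exp_add]
    rw [show (starRingEnd ℂ) (2 * Real.pi * Complex.I / 3) = -(2 * Real.pi * Complex.I / 3) by
      simp [map_div₀, Complex.conj_I, Complex.conj_ofReal, map_ofNat]; ring]
    simp
  have hmul : ω * (starRingEnd ℂ) ω = ω * (-1 - ω) := by
    rw [habs]; linear_combination omega_quad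
  have hω0 : ω ≠ 0 := by
    intro h0; have := omega_cube; rw [h0] at this; norm_num at this
  exact mul_left_cancel₀ hω0 hmul

lemma Jmat_lit : Jmat = !![ω,0,0;0,ω^2,0;0,0,1] := by
  ext i j; fin_cases i <;> fin_cases j <;> simp [Jmat, Matrix.diagonal] <;> rfl

lemma Jmat_sq_lit : Jmat^2 = !![ω^2,0,0;0,ω,0;0,0,1] := by
  rw [pow_two, Jmat_lit]
  ext i j; fin_cases i <;> fin_cases j
  all_goals simp [Matrix.mul_apply, Fin.sum_univ_three]
  all_goals try ring_nf
  all_goals first | rfl | ring1 | linear_combination (ω^2-ω)*omega_quad |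
    linear_combination (-3*ω)*omega_quad

lemma map3 (M : Matrix (Fin 3) (Fin 3) ℂ) (f : ℂ →+* ℂ) :
    M.map f = !![f (M 0 0), f (M 0 1), f (M 0 2);
                 f (M 1 0), f (M 1 1), f (M 1 2);
                 f (M 2 0), f (M 2 1), f (M 2 2)] := by
  ext i j; fin_cases i <;> fin_cases j <;> simp [Matrix.map_apply]

set_option maxHeartbeats 4000000 in

/-- The ℤ₂ symmetry L(k) = 𝓑 conj(L(k̄)) 𝓑 and Z(k) = 𝓑 conj(Z(k̄)) 𝓑. -/
theorem lax_Z2_symmetry (u v ux uxx vx : ℝ) (k : ℂ) (hk : k ≠ 0) :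
    Lmat u v k = Bmat * (Lmat u v (starRingEnd ℂ k)).map (starRingEnd ℂ) * Bmat ∧
    Zmat u v ux uxx vx k
      = Bmat * (Zmat u v ux uxx vx (starRingEnd ℂ k)).map (starRingEnd ℂ) * Bmat := by
  have hqax := omega_quad
  have hcax := conj_omega
  have h3 : ω^3 = 1 := by linear_combination (ω-1)*hqax
  have h4 : ω^4 = ω := by linear_combination (ω^2-ω)*hqax
  have h5 : ω^5 = ω^2 := by linear_combination (ω^3-ω^2)*hqax
  have h6 : ω^6 = 1 := by linear_combination (ω^4+ω-ω^3-1)*hqax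
  constructor
  · ext i j
    fin_cases i <;> fin_cases j
    all_goals simp [Lmat, Jmat_lit, U0, Um1, Bmat, map3, Matrix.mul_apply, Fin.sum_univ_three,
        hcax, Complex.conj_ofReal, map_ofNat, Matrix.vecHead, Matrix.vecTail]
    all_goals try field_simp
    all_goals try ring_nf
    all_goals try simp only [h6, h5, h4, h3, hqax]
    all_goals first | ring1 | exact Or.inl (by ring) | exact Or.inl trivial
  · ext i j
    fin_cases i <;> fin_cases j
    all_goals simp [Zmat, Jmat_sq_lit, V1, Vm1, V0, Bmat, map3, Matrix.mul_apply,
        Fin.sum_univ_three, hcax, Complex.conj_ofReal, map_ofNat, Matrix.vecHead, Matrix.vecTail]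
    all_goals try field_simp
    all_goals try ring_nf
    all_goals try simp only [h6, h5, h4, h3, hqax]
    all_goals first | ring1 | exact Or.inl (by ring)
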